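/- Let S_n be the number of Seymour vertices of the random tournament T_n on n vertices. Then, along even values of n, Var(S_n)/n converges as n → ∞ to the constant 1/4 − 1/(2π). -/

import Mathlib

/-! Model of the uniform random tournament on `n` vertices.  A sample point assigns a
Boolean to every ordered pair of vertices; only the Booleans indexed by pairs `(i, j)`
with `i < j` are consulted: the edge between `i` and `j` is oriented `i → j` iff that
Boolean is `true`.  Since distinct unordered pairs consult distinct coordinates, under the
uniform probability measure the orientations of the edges are independent and each of the
two directions has probability `1/2`. -/

/-- The sample space for the random tournament on `n` vertices. -/
abbrev TOmega (n : ℕ) := Fin n → Fin n → Bool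

/-- `tadj ω i j` : in the tournament coded by `ω`, the edge between `i` and `j`
is oriented from `i` to `j`. -/
def tadj {n : ℕ} (ω : TOmega n) (i j : Fin n) : Prop :=
  i ≠ j ∧ (if i < j then ω i j = true else ω j i = false)

/-- Uniform probability of an event. -/
noncomputable def tPr {n : ℕ} (E : Set (TOmega n)) : ℝ :=
  (∑ ω : TOmega n, E.indicator (fun _ => (1 : ℝ)) ω) / (Fintype.card (TOmega n) : ℝ)

/-- Expectation with respect to the uniform probability measure. -/
noncomputable def tEx {n : ℕ} (f : TOmega n → ℝ) : ℝ :=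
  (∑ ω : TOmega n, f ω) / (Fintype.card (TOmega n) : ℝ)

/-- The first out-neighborhood of `v`: vertices at directed distance exactly 1. -/
def tN1 {n : ℕ} (ω : TOmega n) (v : Fin n) : Set (Fin n) := {w | tadj ω v w}

/-- The second out-neighborhood of `v`: vertices at directed distance exactly 2. -/
def tN2 {n : ℕ} (ω : TOmega n) (v : Fin n) : Set (Fin n) :=
  {w | w ≠ v ∧ ¬ tadj ω v w ∧ ∃ x, tadj ω v x ∧ tadj ω x w}

/-- `v` is a Seymour vertex of the tournament coded by `ω`. -/
def tSeymour {n : ℕ} (ω : TOmega n) (v : Fin n) : Prop :=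
  (tN1 ω v).ncard ≤ (tN2 ω v).ncard

/-- The number of Seymour vertices. -/
noncomputable def tS {n : ℕ} (ω : TOmega n) : ℕ := {v | tSeymour ω v}.ncard

/-- The expected number of Seymour vertices of the random tournament on `n` vertices. -/
noncomputable def tES (n : ℕ) : ℝ := tEx (fun ω : TOmega n => (tS ω : ℝ))

/-- The variance of the number of Seymour vertices of the random tournament on `n`
vertices. -/
noncomputable def tVarS (n : ℕ) : ℝ := tEx (fun ω : TOmega n => ((tS ω : ℝ) - tES n) ^ 2)

/-- `P(Bin(m, 1/2) ≤ x)` for a real threshold `x`:  the probability that a binomial random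
variable with `m` trials and success probability `1/2` is at most `x`. -/
noncomputable def binHalfCdf (m : ℕ) (x : ℝ) : ℝ :=
  ∑ k ∈ Finset.range (m + 1), if (k : ℝ) ≤ x then (m.choose k : ℝ) * (1 / 2) ^ m else 0

open Finset Filter

namespace SeymourAux

open scoped Classical

variable {n : ℕ}

lemma tadj_congr {ω ω' : TOmega n} {a b : Fin n} (h1 : ω a b = ω' a b)
    (h2 : ω b a = ω' b a) : tadj ω a b ↔ tadj ω' a b := by
  unfold tadj; split <;> simp [h1, h2]

/-- canonical coordinate of the unordered pair -/
def γ {n : ℕ} (a b : Fin n) : Fin n × Fin n := if a < b then (a, b) else (b, a)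

lemma tadj_iff_coord {ω : TOmega n} {a b : Fin n} (h : a ≠ b) :
    tadj ω a b ↔ ω (γ a b).1 (γ a b).2 = decide (a < b) := by
  unfold tadj γ
  rcases lt_or_gt_of_ne h with hlt | hgt
  · simp [hlt, h]
  · have : ¬ a < b := not_lt_of_gt hgt
    simp [this, h, not_lt_of_gt hgt]

lemma card_TOmega_pos : 0 < (Fintype.card (TOmega n) : ℝ) := by
  exact_mod_cast Fintype.card_pos

lemma tEx_const (c : ℝ) : tEx (fun _ : TOmega n => c) = c := by
  unfold tEx
  rw [Finset.sum_const, Finset.card_univ, nsmul_eq_mul]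
  exact mul_div_cancel_left₀ c (ne_of_gt card_TOmega_pos)

lemma tEx_add (f g : TOmega n → ℝ) :
    tEx (fun ω => f ω + g ω) = tEx f + tEx g := by
  unfold tEx; rw [Finset.sum_add_distrib, add_div]

lemma tEx_sub (f g : TOmega n → ℝ) :
    tEx (fun ω => f ω - g ω) = tEx f - tEx g := by
  unfold tEx; rw [Finset.sum_sub_distrib, sub_div]

lemma tEx_smul (c : ℝ) (f : TOmega n → ℝ) :
    tEx (fun ω => c * f ω) = c * tEx f := by
  unfold tEx; rw [← Finset.mul_sum, mul_div_assoc]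

lemma tEx_sum {ι : Type*} (s : Finset ι) (f : ι → TOmega n → ℝ) :
    tEx (fun ω => ∑ i ∈ s, f i ω) = ∑ i ∈ s, tEx (f i) := by
  unfold tEx; rw [Finset.sum_comm, Finset.sum_div]

lemma tEx_mono {f g : TOmega n → ℝ} (h : ∀ ω, f ω ≤ g ω) : tEx f ≤ tEx g := by
  unfold tEx
  exact (div_le_div_iff_of_pos_right card_TOmega_pos).mpr (Finset.sum_le_sum fun ω _ => h ω)

lemma tEx_nonneg {f : TOmega n → ℝ} (h : ∀ ω, 0 ≤ f ω) : 0 ≤ tEx f := by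
  have := tEx_mono (f := fun _ : TOmega n => (0:ℝ)) (g := f) h
  rwa [tEx_const] at this

lemma tEx_congr {f g : TOmega n → ℝ} (h : ∀ ω, f ω = g ω) : tEx f = tEx g := by
  unfold tEx; congr 1; exact Finset.sum_congr rfl fun ω _ => h ω

/-- The coordinate-splitting equivalence. -/
def splitEquiv (p : Fin n × Fin n → Prop) [DecidablePred p] :
    TOmega n ≃ (({c : Fin n × Fin n // p c} → Bool) × ({c : Fin n × Fin n // ¬ p c} → Bool)) :=
  (Equiv.curry (Fin n) (Fin n) Bool).symm.trans
    (Equiv.piEquivPiSubtypeProd p (fun _ => Bool))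

lemma splitEquiv_symm_apply (p : Fin n × Fin n → Prop) [DecidablePred p]
    (x : ({c : Fin n × Fin n // p c} → Bool) × ({c : Fin n × Fin n // ¬ p c} → Bool))
    (c : Fin n × Fin n) :
    ((splitEquiv p).symm x) c.1 c.2 = if h : p c then x.1 ⟨c, h⟩ else x.2 ⟨c, h⟩ := rfl

set_option maxHeartbeats 1000000 in
/-- Independence splitting lemma. -/
theorem tEx_mul_indep (p : Fin n × Fin n → Prop) [DecidablePred p] (f g : TOmega n → ℝ)
    (hf : ∀ ω ω' : TOmega n, (∀ c : Fin n × Fin n, p c → ω c.1 c.2 = ω' c.1 c.2) → f ω = f ω')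
    (hg : ∀ ω ω' : TOmega n, (∀ c : Fin n × Fin n, ¬ p c → ω c.1 c.2 = ω' c.1 c.2) → g ω = g ω') :
    tEx (fun ω => f ω * g ω) = tEx f * tEx g := by
  classical
  let e := splitEquiv (n := n) p
  have he := splitEquiv_symm_apply (n := n) p
  set F : ({c : Fin n × Fin n // p c} → Bool) → ℝ := fun a => f (e.symm (a, fun _ => false))
  set G : ({c : Fin n × Fin n // ¬ p c} → Bool) → ℝ := fun b => g (e.symm (fun _ => false, b))
  have hfx : ∀ a b, f (e.symm (a, b)) = F a := by
    intro a b
    apply hf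
    intro c hc
    rw [he, he]
    simp [hc]
  have hgx : ∀ a b, g (e.symm (a, b)) = G b := by
    intro a b
    apply hg
    intro c hc
    rw [he, he]
    simp [hc]
  have hcard : (Fintype.card (TOmega n) : ℝ)
      = (Fintype.card ({c : Fin n × Fin n // p c} → Bool) : ℝ)
        * (Fintype.card ({c : Fin n × Fin n // ¬ p c} → Bool) : ℝ) := by
    rw [Fintype.card_congr e, Fintype.card_prod]; push_cast; ring
  have h1 : ∑ ω : TOmega n, f ω * g ω = (∑ a, F a) * (∑ b, G b) := by
    rw [← Equiv.sum_comp e.symm (fun ω => f ω * g ω)]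
    rw [Fintype.sum_prod_type, Finset.sum_mul_sum]
    exact Finset.sum_congr rfl fun a _ => Finset.sum_congr rfl fun b _ => by
      rw [hfx a b, hgx a b]
  have h2 : ∑ ω : TOmega n, f ω
      = (Fintype.card ({c : Fin n × Fin n // ¬ p c} → Bool) : ℝ) * ∑ a, F a := by
    rw [← Equiv.sum_comp e.symm f, Fintype.sum_prod_type]
    have : ∀ a, ∑ b, f (e.symm (a, b))
        = (Fintype.card ({c : Fin n × Fin n // ¬ p c} → Bool) : ℝ) * F a := by
      intro a
      rw [Finset.sum_congr rfl fun b _ => hfx a b]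
      rw [Finset.sum_const, Finset.card_univ, nsmul_eq_mul]
    rw [Finset.sum_congr rfl fun a _ => this a, ← Finset.mul_sum]
  have h3 : ∑ ω : TOmega n, g ω
      = (Fintype.card ({c : Fin n × Fin n // p c} → Bool) : ℝ) * ∑ b, G b := by
    rw [← Equiv.sum_comp e.symm g, Fintype.sum_prod_type]
    have : ∀ a : {c : Fin n × Fin n // p c} → Bool, ∑ b, g (e.symm (a, b)) = ∑ b, G b :=
      fun a => Finset.sum_congr rfl fun b _ => hgx a b
    rw [Finset.sum_congr rfl fun a _ => this a, Finset.sum_const, Finset.card_univ, nsmul_eq_mul]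
  have cA : (0:ℝ) < (Fintype.card ({c : Fin n × Fin n // p c} → Bool) : ℝ) := by
    exact_mod_cast Fintype.card_pos
  have cB : (0:ℝ) < (Fintype.card ({c : Fin n × Fin n // ¬ p c} → Bool) : ℝ) := by
    exact_mod_cast Fintype.card_pos
  unfold tEx
  rw [h1, h2, h3, hcard]
  field_simp


/-- Indicator function. -/
noncomputable def ind (P : Prop) : ℝ := by classical exact if P then 1 else 0

lemma ind_of {P : Prop} (h : P) : ind P = 1 := by simp [ind, h]
lemma ind_of_not {P : Prop} (h : ¬ P) : ind P = 0 := by simp [ind, h]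
lemma ind_nonneg (P : Prop) : 0 ≤ ind P := by
  classical by_cases h : P <;> simp [ind_of, ind_of_not, h]
lemma ind_le_one (P : Prop) : ind P ≤ 1 := by
  classical by_cases h : P <;> simp [ind_of, ind_of_not, h]
lemma ind_mono {P Q : Prop} (h : P → Q) : ind P ≤ ind Q := by
  classical
  by_cases hP : P
  · rw [ind_of hP, ind_of (h hP)]
  · rw [ind_of_not hP]; exact ind_nonneg Q
lemma ind_congr {P Q : Prop} (h : P ↔ Q) : ind P = ind Q := by
  classical by_cases hP : P
  · rw [ind_of hP, ind_of (h.mp hP)]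
  · rw [ind_of_not hP, ind_of_not (fun q => hP (h.mpr q))]
lemma ind_mul_ind (P Q : Prop) : ind P * ind Q = ind (P ∧ Q) := by
  classical
  by_cases hP : P <;> by_cases hQ : Q <;>
    simp [ind_of, ind_of_not, hP, hQ, ind_of_not (P := P ∧ Q), and_comm]
lemma ind_prod {ι : Type*} (s : Finset ι) (P : ι → Prop) :
    (∏ i ∈ s, ind (P i)) = ind (∀ i ∈ s, P i) := by
  classical
  induction s using Finset.induction with
  | empty => simp [ind_of]
  | @insert i s hi ih =>
      rw [Finset.prod_insert hi, ih, ind_mul_ind]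
      apply ind_congr
      simp [Finset.forall_mem_insert]

/-- flipping a single coordinate -/
def flipPair (c0 : Fin n × Fin n) : TOmega n ≃ TOmega n where
  toFun ω i j := if (i, j) = c0 then !(ω i j) else ω i j
  invFun ω i j := if (i, j) = c0 then !(ω i j) else ω i j
  left_inv ω := by funext i j; by_cases h : (i, j) = c0 <;> simp [h]
  right_inv ω := by funext i j; by_cases h : (i, j) = c0 <;> simp [h]

lemma tadj_flipPair {a b : Fin n} (h : a ≠ b) (ω : TOmega n) :
    tadj (flipPair (γ a b) ω) a b ↔ ¬ tadj ω a b := by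
  rw [tadj_iff_coord h, tadj_iff_coord h]
  have hcoord : (flipPair (γ a b) ω) (γ a b).1 (γ a b).2 = !(ω (γ a b).1 (γ a b).2) := by
    show (if ((γ a b).1, (γ a b).2) = γ a b then _ else _) = _
    simp
  rw [hcoord]
  cases hω : ω (γ a b).1 (γ a b).2 <;> cases hd : (decide (a < b)) <;> simp

lemma tEx_pair {a b : Fin n} (h : a ≠ b) (F : Bool → ℝ) :
    tEx (fun ω => F (decide (tadj ω a b))) = (F true + F false) / 2 := by
  classical
  have key : ∑ ω : TOmega n, F (decide (tadj ω a b))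
      = ∑ ω : TOmega n, F (!(decide (tadj ω a b))) := by
    rw [← Equiv.sum_comp (flipPair (γ a b)) (fun ω => F (decide (tadj ω a b)))]
    refine Finset.sum_congr rfl fun ω _ => ?_
    have hflip := tadj_flipPair h ω
    by_cases hadj : tadj ω a b <;> simp [hadj, hflip]
  have h2 : (2:ℝ) * ∑ ω : TOmega n, F (decide (tadj ω a b))
      = (Fintype.card (TOmega n) : ℝ) * (F true + F false) := by
    rw [two_mul]
    nth_rewrite 2 [key]
    rw [← Finset.sum_add_distrib]
    have : ∀ ω : TOmega n, F (decide (tadj ω a b)) + F (!(decide (tadj ω a b)))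
        = F true + F false := by
      intro ω
      by_cases hadj : tadj ω a b <;> simp [hadj] <;> ring
    rw [Finset.sum_congr rfl fun ω _ => this ω, Finset.sum_const, Finset.card_univ,
      nsmul_eq_mul]
  unfold tEx
  rw [div_eq_div_iff (ne_of_gt card_TOmega_pos) (two_ne_zero)]
  linarith [h2]

/-- Generalized independence: product over groups with disjoint coordinate supports. -/
theorem tEx_prod_indep {ι : Type*} [DecidableEq ι] (s : Finset ι)
    (p : ι → Fin n × Fin n → Prop) [∀ i, DecidablePred (p i)]
    (f : ι → TOmega n → ℝ)
    (hdep : ∀ i ∈ s, ∀ ω ω' : TOmega n,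
      (∀ c : Fin n × Fin n, p i c → ω c.1 c.2 = ω' c.1 c.2) → f i ω = f i ω')
    (hdisj : ∀ i ∈ s, ∀ j ∈ s, i ≠ j → ∀ c, p i c → ¬ p j c) :
    tEx (fun ω => ∏ i ∈ s, f i ω) = ∏ i ∈ s, tEx (f i) := by
  classical
  induction s using Finset.induction with
  | empty => simpa using tEx_const (n := n) 1
  | @insert i s hi ih =>
      rw [Finset.prod_insert hi]
      have step : tEx (fun ω => ∏ j ∈ insert i s, f j ω)
          = tEx (f i) * tEx (fun ω => ∏ j ∈ s, f j ω) := by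
        have := tEx_mul_indep (p i) (f i) (fun ω => ∏ j ∈ s, f j ω)
          (hdep i (Finset.mem_insert_self i s))
          (fun ω ω' hagree => Finset.prod_congr rfl fun j hj => by
            refine hdep j (Finset.mem_insert_of_mem hj) ω ω' fun c hc => hagree c ?_
            exact hdisj j (Finset.mem_insert_of_mem hj) i (Finset.mem_insert_self i s)
              (fun hji => hi (hji ▸ hj)) c hc)
        rw [← this]
        exact tEx_congr fun ω => (Finset.prod_insert hi)
      rw [step, ih
        (fun j hj => hdep j (Finset.mem_insert_of_mem hj))
        (fun j hj l hl hjl => hdisj j (Finset.mem_insert_of_mem hj) l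
          (Finset.mem_insert_of_mem hl) hjl)]

/-- Product of single-edge functions over distinct unordered pairs. -/
theorem tEx_prod_pairs {ι : Type*} [DecidableEq ι] (s : Finset ι)
    (a b : ι → Fin n) (F : ι → Bool → ℝ)
    (hab : ∀ i ∈ s, a i ≠ b i)
    (hdisj : ∀ i ∈ s, ∀ j ∈ s, i ≠ j →
      ¬(a i = a j ∧ b i = b j) ∧ ¬(a i = b j ∧ b i = a j)) :
    tEx (fun ω => ∏ i ∈ s, F i (decide (tadj ω (a i) (b i))))
      = ∏ i ∈ s, ((F i true + F i false) / 2) := by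
  classical
  rw [tEx_prod_indep s (fun i c => c = (a i, b i) ∨ c = (b i, a i))
    (fun i ω => F i (decide (tadj ω (a i) (b i)))) ?_ ?_]
  · exact Finset.prod_congr rfl fun i hi => tEx_pair (hab i hi) (F i)
  · intro i hi ω ω' hc
    have h1 : ω (a i) (b i) = ω' (a i) (b i) := hc (a i, b i) (Or.inl rfl)
    have h2 : ω (b i) (a i) = ω' (b i) (a i) := hc (b i, a i) (Or.inr rfl)
    exact congrArg (F i) (decide_eq_decide.mpr (tadj_congr h1 h2))
  · intro i hi j hj hij c hpi hpj
    rcases hdisj i hi j hj hij with ⟨hA, hB⟩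
    rcases hpi with rfl | rfl <;> rcases hpj with h | h <;>
        simp only [Prod.mk.injEq] at h
    · exact hA ⟨h.1, h.2⟩
    · exact hB ⟨h.1, h.2⟩
    · exact hB ⟨h.2, h.1⟩
    · exact hA ⟨h.2, h.1⟩


open scoped Classical in
/-- expectation of the indicator that the out-neighbourhood pattern equals `s` -/
lemma tEx_ind_filter_eq (v : Fin n) (T : Finset (Fin n)) (hv : v ∉ T) (s : Finset (Fin n))
    (hs : s ⊆ T) :
    tEx (fun ω => ind (T.filter (fun x => tadj ω v x) = s)) = (1/2 : ℝ) ^ T.card := by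
  have hpt : ∀ ω : TOmega n, ind (T.filter (fun x => tadj ω v x) = s)
      = ∏ x ∈ T, ind ((decide (tadj ω v x)) = true ↔ x ∈ s) := by
    intro ω
    rw [ind_prod]
    apply ind_congr
    constructor
    · intro h x hx
      rw [← h]
      simp [Finset.mem_filter, hx]
    · intro h
      apply Finset.ext
      intro x
      simp only [Finset.mem_filter]
      constructor
      · rintro ⟨hxT, hadj⟩
        exact (h x hxT).mp (by simpa using hadj)
      · intro hxs
        exact ⟨hs hxs, by simpa using (h x (hs hxs)).mpr hxs⟩
  rw [tEx_congr hpt]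
  rw [tEx_prod_pairs T (fun _ => v) (fun x => x) (fun x b => ind (b = true ↔ x ∈ s))
    (fun x hx he => hv (show v ∈ T by rw [show v = x from he]; exact hx)) ?_]
  · rw [Finset.prod_congr rfl (fun x hx => ?_), Finset.prod_const, one_div]
    by_cases hxs : x ∈ s <;>
      simp [ind_of, ind_of_not, hxs] <;> norm_num
  · intro x hx y hy hxy
    constructor
    · exact fun h => hxy h.2
    · exact fun h => hv (show v ∈ T by rw [show v = y from h.1]; exact hy)

open scoped Classical in
/-- number of small subsets, as a sum of binomial coefficients -/
lemma count_powerset_card_le (T : Finset (Fin n)) (j : ℕ) :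
    (∑ s ∈ T.powerset, ind (s.card ≤ j))
      = ∑ i ∈ Finset.range (T.card + 1), if i ≤ j then (T.card.choose i : ℝ) else 0 := by
  rw [Finset.sum_powerset T (fun s => ind (s.card ≤ j))]
  apply Finset.sum_congr rfl
  intro i _
  have : ∀ s ∈ Finset.powersetCard i T, ind (s.card ≤ j) = ind (i ≤ j) := by
    intro s hs
    rw [(Finset.mem_powersetCard.mp hs).2]
  rw [Finset.sum_congr rfl this, Finset.sum_const, Finset.card_powersetCard, nsmul_eq_mul]
  by_cases hij : i ≤ j <;> simp [ind_of, ind_of_not, hij]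

open scoped Classical in
lemma ind_card_filter_le (T : Finset (Fin n)) (P : Fin n → Prop) (j : ℕ) :
    ind ((T.filter P).card ≤ j)
      = ∑ s ∈ T.powerset, ind (T.filter P = s) * ind (s.card ≤ j) := by
  have hmem : T.filter P ∈ T.powerset := by
    simp [Finset.mem_powerset, Finset.filter_subset]
  rw [Finset.sum_eq_single_of_mem (T.filter P) hmem, ind_of rfl, one_mul]
  intro s _ hne
  rw [ind_of_not (fun h => hne h.symm), zero_mul]

/-- out-degree -/
noncomputable def deg (ω : TOmega n) (v : Fin n) : ℕ :=
  ((Finset.univ.erase v).filter (fun x => tadj ω v x)).card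

/-- restricted vertex set -/
def Tuv (u v : Fin n) : Finset (Fin n) := (Finset.univ.erase v).erase u

/-- restricted out-degree count (neighbours of `u` other than `v`) -/
noncomputable def cnt (ω : TOmega n) (u v : Fin n) : ℕ :=
  ((Tuv u v).filter (fun x => tadj ω u x)).card

lemma not_mem_Tuv_left (u v : Fin n) : u ∉ Tuv u v := by simp [Tuv]
lemma not_mem_Tuv_right (u v : Fin n) : v ∉ Tuv u v := by simp [Tuv]

lemma card_Tuv {u v : Fin n} (huv : u ≠ v) : (Tuv u v).card = n - 2 := by
  unfold Tuv
  rw [Finset.card_erase_of_mem (by simp [huv]), Finset.card_erase_of_mem (by simp),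
    Finset.card_univ, Fintype.card_fin]
  omega

lemma deg_split {u v : Fin n} (huv : u ≠ v) (ω : TOmega n) :
    deg ω u = cnt ω u v + (if tadj ω u v then 1 else 0) := by
  classical
  unfold deg cnt
  have h1 : Finset.univ.erase u = insert v (Tuv u v) := by
    unfold Tuv
    rw [Finset.erase_right_comm]
    rw [Finset.insert_erase (by simp [Ne.symm huv])]
  rw [h1, Finset.filter_insert]
  by_cases h : tadj ω u v
  · rw [if_pos h, Finset.card_insert_of_notMem
      (fun hc => not_mem_Tuv_right u v (Finset.mem_of_mem_filter v hc)), if_pos h]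
  · rw [if_neg h, if_neg h, add_zero]


open scoped Classical in
/-- E1: expectation of the indicator that the degree is at most `j`. -/
lemma tEx_ind_deg_le (v : Fin n) (j : ℕ) :
    tEx (fun ω => ind (deg ω v ≤ j))
      = (1/2 : ℝ) ^ (n - 1)
        * ∑ i ∈ Finset.range ((n-1) + 1), (if i ≤ j then (((n-1).choose i : ℕ) : ℝ) else 0) := by
  classical
  set T := (Finset.univ.erase v) with hT
  have hvT : v ∉ T := by simp [hT]
  have hcard : T.card = n - 1 := by
    rw [hT, Finset.card_erase_of_mem (by simp), Finset.card_univ, Fintype.card_fin]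
  have hpt : ∀ ω : TOmega n, ind (deg ω v ≤ j)
      = ∑ s ∈ T.powerset, ind (T.filter (fun x => tadj ω v x) = s) * ind (s.card ≤ j) := by
    intro ω
    exact ind_card_filter_le T _ j
  rw [tEx_congr hpt, tEx_sum]
  have hterm : ∀ s ∈ T.powerset,
      tEx (fun ω => ind (T.filter (fun x => tadj ω v x) = s) * ind (s.card ≤ j))
        = (1/2 : ℝ) ^ (n-1) * ind (s.card ≤ j) := by
    intro s hs
    rw [tEx_congr (g := fun ω => ind (s.card ≤ j) * ind (T.filter (fun x => tadj ω v x) = s))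
      (fun ω => mul_comm _ _), tEx_smul,
      tEx_ind_filter_eq v T hvT s (Finset.mem_powerset.mp hs), hcard, mul_comm]
  rw [Finset.sum_congr rfl hterm, ← Finset.mul_sum]
  congr 1
  rw [count_powerset_card_le, hcard]

lemma sum_bool_ind (P : Prop) (g : Bool → ℝ) :
    (∑ e : Bool, ind ((decide P) = e) * g e) = g (decide P) := by
  rw [Fintype.sum_bool]
  rcases _root_.em P with h | h
  · rw [decide_eq_true h, ind_of rfl, ind_of_not (by simp), one_mul, zero_mul, add_zero]
  · rw [decide_eq_false h, ind_of rfl, ind_of_not (by simp), one_mul, zero_mul, zero_add]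

set_option maxHeartbeats 2000000 in
/-- E2 : the two-point function. -/
lemma tEx_II {u v : Fin n} (huv : u ≠ v) (j1 j2 : ℕ) (hj : j1 + 1 = j2) :
    tEx (fun ω => ind (deg ω u ≤ j2) * ind (deg ω v ≤ j2))
      = 2 * ((1/2 : ℝ) ^ (2 * (n - 2) + 1))
        * (∑ s ∈ (Tuv u v).powerset, ind (s.card ≤ j1))
        * (∑ s ∈ (Tuv u v).powerset, ind (s.card ≤ j2)) := by
  classical
  set T := Tuv u v with hT
  have hTsymm : Tuv v u = T := by rw [hT]; unfold Tuv; exact Finset.erase_right_comm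
  have hcard : T.card = n - 2 := card_Tuv huv
  set cthr : Bool → ℕ := fun e => if e then j1 else j2 with hcthr
  -- pointwise expansion
  have hpt : ∀ ω : TOmega n, ind (deg ω u ≤ j2) * ind (deg ω v ≤ j2)
      = ∑ e : Bool, ind ((decide (tadj ω u v)) = e)
          * (ind (cnt ω u v ≤ cthr e) * ind (cnt ω v u ≤ cthr (!e))) := by
    intro ω
    rw [sum_bool_ind (tadj ω u v)
      (fun e => ind (cnt ω u v ≤ cthr e) * ind (cnt ω v u ≤ cthr (!e)))]
    have hdu := deg_split huv ω
    have hdv := deg_split (Ne.symm huv) ω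
    have hmutual : tadj ω v u ↔ ¬ tadj ω u v := by
      rw [tadj_iff_coord huv, tadj_iff_coord (Ne.symm huv)]
      have : γ v u = γ u v := by
        unfold γ
        rcases lt_or_gt_of_ne huv with h | h
        · simp [h, not_lt_of_gt h]
        · simp [h, not_lt_of_gt h]
      rw [this]
      rcases lt_or_gt_of_ne huv with h | h
      · simp [h, not_lt_of_gt h]
      · simp [not_lt_of_gt h, h]
    by_cases h : tadj ω u v
    · have hv' : ¬ tadj ω v u := fun hc => (hmutual.mp hc) h
      rw [if_pos h] at hdu
      rw [if_neg hv'] at hdv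
      rw [decide_eq_true h, Bool.not_true,
        show cthr true = j1 from rfl, show cthr false = j2 from rfl]
      congr 1
      · exact ind_congr (by omega)
      · exact ind_congr (by omega)
    · have hv' : tadj ω v u := hmutual.mpr h
      rw [if_neg h] at hdu
      rw [if_pos hv'] at hdv
      rw [decide_eq_false h, Bool.not_false,
        show cthr true = j1 from rfl, show cthr false = j2 from rfl]
      congr 1
      · exact ind_congr (by omega)
      · exact ind_congr (by omega)
  rw [tEx_congr hpt, tEx_sum]
  -- per-e evaluation
  have he : ∀ e : Bool,
      tEx (fun ω => ind ((decide (tadj ω u v)) = e)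
          * (ind (cnt ω u v ≤ cthr e) * ind (cnt ω v u ≤ cthr (!e))))
        = (1/2 : ℝ) * ((1/2 : ℝ) ^ (n-2) * ∑ s ∈ T.powerset, ind (s.card ≤ cthr e))
          * ((1/2 : ℝ) ^ (n-2) * ∑ s ∈ T.powerset, ind (s.card ≤ cthr (!e))) := by
    intro e
    -- expand the two cnt indicators over subsets
    have hexp : ∀ ω : TOmega n, ind ((decide (tadj ω u v)) = e)
        * (ind (cnt ω u v ≤ cthr e) * ind (cnt ω v u ≤ cthr (!e)))
      = ∑ s ∈ T.powerset, ∑ t ∈ T.powerset,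
          (ind (s.card ≤ cthr e) * ind (t.card ≤ cthr (!e)))
          * (ind ((decide (tadj ω u v)) = e)
            * (ind (T.filter (fun x => tadj ω u x) = s)
              * ind (T.filter (fun x => tadj ω v x) = t))) := by
      intro ω
      have h1 : ind (cnt ω u v ≤ cthr e)
          = ∑ s ∈ T.powerset, ind (T.filter (fun x => tadj ω u x) = s)
              * ind (s.card ≤ cthr e) := ind_card_filter_le T _ _
      have h2 : ind (cnt ω v u ≤ cthr (!e))
          = ∑ t ∈ T.powerset, ind (T.filter (fun x => tadj ω v x) = t)
              * ind (t.card ≤ cthr (!e)) := by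
        rw [show cnt ω v u = ((Tuv v u).filter (fun x => tadj ω v x)).card from rfl, hTsymm]
        exact ind_card_filter_le T _ _
      rw [h1, h2, Finset.sum_mul_sum, Finset.mul_sum]
      apply Finset.sum_congr rfl; intro s _
      rw [Finset.mul_sum]
      apply Finset.sum_congr rfl; intro t _
      ring
    rw [tEx_congr hexp, tEx_sum]
    have hterm : ∀ s ∈ T.powerset,
        tEx (fun ω => ∑ t ∈ T.powerset,
          (ind (s.card ≤ cthr e) * ind (t.card ≤ cthr (!e)))
          * (ind ((decide (tadj ω u v)) = e)
            * (ind (T.filter (fun x => tadj ω u x) = s)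
              * ind (T.filter (fun x => tadj ω v x) = t))))
        = ∑ t ∈ T.powerset, (ind (s.card ≤ cthr e) * ind (t.card ≤ cthr (!e)))
            * ((1/2 : ℝ) * ((1/2 : ℝ)^(n-2) * (1/2 : ℝ)^(n-2))) := by
      intro s hs
      rw [tEx_sum]
      apply Finset.sum_congr rfl
      intro t ht
      rw [tEx_smul]
      congr 1
      -- independence of the three factors
      have hindep := tEx_prod_indep (ι := Fin 3) Finset.univ
        (p := ![fun c => c = (u, v) ∨ c = (v, u),
               fun c => (c.1 = u ∨ c.2 = u) ∧ ¬(c.1 = v ∨ c.2 = v),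
               fun c => (c.1 = v ∨ c.2 = v) ∧ ¬(c.1 = u ∨ c.2 = u)])
        (f := ![fun ω => ind ((decide (tadj ω u v)) = e),
               fun ω => ind (T.filter (fun x => tadj ω u x) = s),
               fun ω => ind (T.filter (fun x => tadj ω v x) = t)]) ?_ ?_
      · have hl : ∀ ω : TOmega n, ind ((decide (tadj ω u v)) = e)
            * (ind (T.filter (fun x => tadj ω u x) = s)
              * ind (T.filter (fun x => tadj ω v x) = t))
            = ∏ i : Fin 3, (![fun ω => ind ((decide (tadj ω u v)) = e),
               fun ω => ind (T.filter (fun x => tadj ω u x) = s),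
               fun ω => ind (T.filter (fun x => tadj ω v x) = t)]) i ω := by
          intro ω
          rw [Fin.prod_univ_three]
          simp only [Matrix.cons_val_zero, Matrix.cons_val_one, Matrix.head_cons,
            Matrix.cons_val_two, Matrix.tail_cons]
          ring
        rw [tEx_congr hl, hindep, Fin.prod_univ_three]
        simp only [Matrix.cons_val_zero, Matrix.cons_val_one, Matrix.head_cons,
          Matrix.cons_val_two, Matrix.tail_cons]
        have e1 : tEx (fun ω => ind ((decide (tadj ω u v)) = e)) = (1/2 : ℝ) := by
          rw [tEx_pair huv (fun b => ind (b = e))]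
          cases e <;> simp [ind_of, ind_of_not] <;> norm_num
        have e2 : tEx (fun ω => ind (T.filter (fun x => tadj ω u x) = s)) = (1/2 : ℝ)^(n-2) := by
          rw [tEx_ind_filter_eq u T (not_mem_Tuv_left u v) s (Finset.mem_powerset.mp hs), hcard]
        have e3 : tEx (fun ω => ind (T.filter (fun x => tadj ω v x) = t)) = (1/2 : ℝ)^(n-2) := by
          rw [tEx_ind_filter_eq v T (not_mem_Tuv_right u v) t (Finset.mem_powerset.mp ht), hcard]
        rw [e1, e2, e3]
        ring
      · -- dependence
        intro i _
        fin_cases i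
        · intro ω ω' hc
          simp only [Matrix.cons_val_zero]
          have h1 : ω u v = ω' u v := hc (u, v) (Or.inl rfl)
          have h2 : ω v u = ω' v u := hc (v, u) (Or.inr rfl)
          exact congrArg (fun b => ind (b = e)) (decide_eq_decide.mpr (tadj_congr h1 h2))
        · intro ω ω' hc
          simp only [Matrix.cons_val_one, Matrix.head_cons]
          congr 1
          apply ind_congr
          constructor <;>
          · intro hfil
            rw [← hfil]
            apply Finset.filter_congr
            intro x hx
            have hxv : x ≠ v := by
              intro hxv; rw [hxv] at hx; exact not_mem_Tuv_right u v hx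
            have g1 : ω u x = ω' u x := hc (u, x) ⟨Or.inl rfl, by simp [huv, hxv]⟩
            have g2 : ω x u = ω' x u := hc (x, u) ⟨Or.inr rfl, by simp [huv, hxv]⟩
            first
              | exact (tadj_congr g1 g2).symm
              | exact (tadj_congr g1.symm g2.symm).symm
        · intro ω ω' hc
          simp only [Matrix.cons_val_two, Matrix.tail_cons, Matrix.head_cons]
          congr 1
          apply ind_congr
          constructor <;>
          · intro hfil
            rw [← hfil]
            apply Finset.filter_congr
            intro x hx
            have hxu : x ≠ u := by
              intro hxu; rw [hxu] at hx; exact not_mem_Tuv_left u v hx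
            have g1 : ω v x = ω' v x := hc (v, x) ⟨Or.inl rfl, by simp [Ne.symm huv, hxu]⟩
            have g2 : ω x v = ω' x v := hc (x, v) ⟨Or.inr rfl, by simp [Ne.symm huv, hxu]⟩
            first
              | exact (tadj_congr g1 g2).symm
              | exact (tadj_congr g1.symm g2.symm).symm
      · -- disjointness
        intro i _ l _ hil c
        fin_cases i <;> fin_cases l <;>
          try simp only [Matrix.cons_val_zero, Matrix.cons_val_one, Matrix.head_cons,
            Matrix.cons_val_two, Matrix.tail_cons]
        · exact absurd rfl hil
        · rintro (rfl | rfl) ⟨h1, h2⟩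
          · exact h2 (Or.inr rfl)
          · exact h2 (Or.inl rfl)
        · rintro (rfl | rfl) ⟨h1, h2⟩
          · exact h2 (Or.inl rfl)
          · exact h2 (Or.inr rfl)
        · rintro ⟨h1, h2⟩ (rfl | rfl)
          · exact h2 (Or.inr rfl)
          · exact h2 (Or.inl rfl)
        · exact absurd rfl hil
        · rintro ⟨h1, h2⟩ ⟨g1, g2⟩
          exact g2 h1
        · rintro ⟨h1, h2⟩ (rfl | rfl)
          · exact h2 (Or.inl rfl)
          · exact h2 (Or.inr rfl)
        · rintro ⟨h1, h2⟩ ⟨g1, g2⟩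
          exact g2 h1
        · exact absurd rfl hil
    rw [Finset.sum_congr rfl hterm]
    have inner : ∀ s : Finset (Fin n), (∑ t ∈ T.powerset,
        ind (s.card ≤ cthr e) * ind (t.card ≤ cthr (!e))
          * (1/2 * ((1/2:ℝ)^(n-2) * (1/2:ℝ)^(n-2))))
        = ind (s.card ≤ cthr e) * ((∑ t ∈ T.powerset, ind (t.card ≤ cthr (!e)))
          * (1/2 * ((1/2:ℝ)^(n-2) * (1/2:ℝ)^(n-2)))) := by
      intro s
      rw [← Finset.sum_mul, ← Finset.mul_sum, mul_assoc]
    rw [Finset.sum_congr rfl (fun s _ => inner s), ← Finset.sum_mul]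
    ring
  rw [Fintype.sum_bool, he true, he false, Bool.not_true, Bool.not_false,
    show cthr true = j1 from rfl, show cthr false = j2 from rfl]
  have : (2 * (n-2) + 1) = ((n-2) + (n-2)) + 1 := by ring
  rw [this, pow_add, pow_add, pow_one]
  ring


lemma tadj_rev {u v : Fin n} (huv : u ≠ v) (ω : TOmega n) :
    tadj ω v u ↔ ¬ tadj ω u v := by
  rw [tadj_iff_coord huv, tadj_iff_coord (Ne.symm huv)]
  have hγ : γ v u = γ u v := by
    unfold γ
    rcases lt_or_gt_of_ne huv with h | h
    · simp [h, not_lt_of_gt h]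
    · simp [h, not_lt_of_gt h]
  rw [hγ]
  rcases lt_or_gt_of_ne huv with h | h
  · simp [h, not_lt_of_gt h]
  · simp [not_lt_of_gt h, h]

lemma ind_decide (P : Prop) : ind ((decide P) = true) = ind P := by
  rcases _root_.em P with h | h
  · rw [decide_eq_true h, ind_of rfl, ind_of h]
  · rw [decide_eq_false h, ind_of_not (by simp), ind_of_not h]

/-- `w` dominates `v` together with all of `v`'s out-neighbours. -/
def Dom (ω : TOmega n) (v w : Fin n) : Prop :=
  w ≠ v ∧ ¬ tadj ω v w ∧ ∀ x, tadj ω v x → tadj ω w x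

/-- the triple set -/
def T3 (v w1 w2 : Fin n) : Finset (Fin n) :=
  ((Finset.univ.erase v).erase w1).erase w2

lemma mem_T3 {v w1 w2 x : Fin n} :
    x ∈ T3 v w1 w2 ↔ x ≠ w2 ∧ x ≠ w1 ∧ x ≠ v := by
  simp [T3, and_assoc]

lemma card_T3 {v w1 w2 : Fin n} (h1 : w1 ≠ v) (h2 : w2 ≠ v) (h12 : w1 ≠ w2) :
    (T3 v w1 w2).card = n - 3 := by
  unfold T3
  rw [Finset.card_erase_of_mem (by simp [Ne.symm h12, h2]),
    Finset.card_erase_of_mem (by simp [h1]),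
    Finset.card_erase_of_mem (by simp), Finset.card_univ, Fintype.card_fin]
  omega

set_option maxHeartbeats 2000000 in
/-- E3 : expectation of the indicator of a dominating pair. -/
lemma tEx_bad (v w1 w2 : Fin n) (hn : 0 < n) :
    tEx (fun ω => ind (w1 ≠ w2 ∧ Dom ω v w1 ∧ Dom ω v w2)) ≤ (5/8 : ℝ) ^ (n - 3) := by
  have hpow : (0:ℝ) < (5/8 : ℝ) ^ (n-3) := by positivity
  by_cases h12 : w1 = w2
  · rw [tEx_congr (g := fun _ => (0:ℝ)) (fun ω => ind_of_not (fun hc => hc.1 h12)),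
      tEx_const]
    exact hpow.le
  by_cases h1v : w1 = v
  · rw [tEx_congr (g := fun _ => (0:ℝ)) (fun ω => ind_of_not (fun hc => hc.2.1.1 h1v)),
      tEx_const]
    exact hpow.le
  by_cases h2v : w2 = v
  · rw [tEx_congr (g := fun _ => (0:ℝ)) (fun ω => ind_of_not (fun hc => hc.2.2.1 h2v)),
      tEx_const]
    exact hpow.le
  -- now v, w1, w2 pairwise distinct
  set T := T3 v w1 w2 with hT
  have hmemT : ∀ x ∈ T, x ≠ w2 ∧ x ≠ w1 ∧ x ≠ v := fun x hx => mem_T3.mp hx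
  set φ : Fin n → TOmega n → ℝ :=
    fun x ω => ind (tadj ω v x → tadj ω w1 x ∧ tadj ω w2 x) with hφ
  -- pointwise identity
  have hpt : ∀ ω : TOmega n, ind (w1 ≠ w2 ∧ Dom ω v w1 ∧ Dom ω v w2)
      = ind (tadj ω w1 v) * (ind (tadj ω w2 v) * ∏ x ∈ T, φ x ω) := by
    intro ω
    rw [hφ]
    rw [ind_prod, ind_mul_ind, ind_mul_ind]
    apply ind_congr
    constructor
    · rintro ⟨hw, ⟨ha1, hb1, hc1⟩, ⟨ha2, hb2, hc2⟩⟩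
      exact ⟨(tadj_rev (Ne.symm ha1) ω).mpr hb1,
        (tadj_rev (Ne.symm ha2) ω).mpr hb2,
        fun x _ hx => ⟨hc1 x hx, hc2 x hx⟩⟩
    · rintro ⟨hw1v, hw2v, hall⟩
      have hb1 : ¬ tadj ω v w1 := (tadj_rev (Ne.symm h1v) ω).mp hw1v
      have hb2 : ¬ tadj ω v w2 := (tadj_rev (Ne.symm h2v) ω).mp hw2v
      refine ⟨h12, ⟨h1v, hb1, ?_⟩, ⟨h2v, hb2, ?_⟩⟩
      · intro x hx
        have hxv : x ≠ v := fun hc => (hc ▸ hx).1 rfl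
        have hxw1 : x ≠ w1 := fun hc => hb1 (hc ▸ hx)
        have hxw2 : x ≠ w2 := fun hc => hb2 (hc ▸ hx)
        exact (hall x (mem_T3.mpr ⟨hxw2, hxw1, hxv⟩) hx).1
      · intro x hx
        have hxv : x ≠ v := fun hc => (hc ▸ hx).1 rfl
        have hxw1 : x ≠ w1 := fun hc => hb1 (hc ▸ hx)
        have hxw2 : x ≠ w2 := fun hc => hb2 (hc ▸ hx)
        exact (hall x (mem_T3.mpr ⟨hxw2, hxw1, hxv⟩) hx).2
  rw [tEx_congr hpt]
  -- congruence helper for φ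
  have hφcong : ∀ x, x ≠ v → x ≠ w1 → x ≠ w2 → ∀ ω ω' : TOmega n,
      ω v x = ω' v x → ω x v = ω' x v → ω w1 x = ω' w1 x → ω x w1 = ω' x w1 →
      ω w2 x = ω' w2 x → ω x w2 = ω' x w2 → φ x ω = φ x ω' := by
    intro x hxv hx1 hx2 ω ω' a1 a2 b1 b2 c1 c2
    rw [hφ]
    exact ind_congr (by
      rw [tadj_congr a1 a2, tadj_congr b1 b2, tadj_congr c1 c2])
  -- first split
  have split1 : tEx (fun ω => ind (tadj ω w1 v) * (ind (tadj ω w2 v) * ∏ x ∈ T, φ x ω))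
      = tEx (fun ω => ind (tadj ω w1 v))
        * tEx (fun ω => ind (tadj ω w2 v) * ∏ x ∈ T, φ x ω) := by
    apply tEx_mul_indep (fun c => c = (w1, v) ∨ c = (v, w1))
    · intro ω ω' hc
      exact ind_congr (tadj_congr (hc (w1, v) (Or.inl rfl)) (hc (v, w1) (Or.inr rfl)))
    · intro ω ω' hc
      have hx : ∀ a b : Fin n, ¬((a,b) = (w1,v) ∨ (a,b) = (v,w1)) → ω a b = ω' a b :=
        fun a b h => hc (a, b) h
      congr 1
      · refine ind_congr (tadj_congr (hx w2 v ?_) (hx v w2 ?_)) <;>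
          · rintro (h | h) <;> simp only [Prod.mk.injEq] at h
            · exact h12 (by tauto)
            · exact h2v (by tauto)
      · refine Finset.prod_congr rfl fun x hx3 => ?_
        obtain ⟨hw2', hw1', hv'⟩ := hmemT x hx3
        refine hφcong x hv' hw1' hw2' ω ω' (hx v x ?_) (hx x v ?_) (hx w1 x ?_)
          (hx x w1 ?_) (hx w2 x ?_) (hx x w2 ?_) <;>
          · rintro (h | h) <;> simp only [Prod.mk.injEq] at h <;> tauto
  -- second split
  have split2 : tEx (fun ω => ind (tadj ω w2 v) * ∏ x ∈ T, φ x ω)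
      = tEx (fun ω => ind (tadj ω w2 v)) * tEx (fun ω => ∏ x ∈ T, φ x ω) := by
    apply tEx_mul_indep (fun c => c = (w2, v) ∨ c = (v, w2))
    · intro ω ω' hc
      exact ind_congr (tadj_congr (hc (w2, v) (Or.inl rfl)) (hc (v, w2) (Or.inr rfl)))
    · intro ω ω' hc
      have hx : ∀ a b : Fin n, ¬((a,b) = (w2,v) ∨ (a,b) = (v,w2)) → ω a b = ω' a b :=
        fun a b h => hc (a, b) h
      refine Finset.prod_congr rfl fun x hx3 => ?_
      obtain ⟨hw2', hw1', hv'⟩ := hmemT x hx3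
      refine hφcong x hv' hw1' hw2' ω ω' (hx v x ?_) (hx x v ?_) (hx w1 x ?_)
        (hx x w1 ?_) (hx w2 x ?_) (hx x w2 ?_) <;>
        · rintro (h | h) <;> simp only [Prod.mk.injEq] at h <;> tauto
  -- product over T
  have split3 : tEx (fun ω => ∏ x ∈ T, φ x ω) = ∏ x ∈ T, tEx (φ x) := by
    apply tEx_prod_indep T
      (p := fun x c => (c.2 = x ∧ (c.1 = v ∨ c.1 = w1 ∨ c.1 = w2))
        ∨ (c.1 = x ∧ (c.2 = v ∨ c.2 = w1 ∨ c.2 = w2)))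
    · intro x hx3 ω ω' hc
      obtain ⟨hw2', hw1', hv'⟩ := hmemT x hx3
      refine hφcong x hv' hw1' hw2' ω ω'
        (hc (v, x) (Or.inl ⟨rfl, Or.inl rfl⟩))
        (hc (x, v) (Or.inr ⟨rfl, Or.inl rfl⟩))
        (hc (w1, x) (Or.inl ⟨rfl, Or.inr (Or.inl rfl)⟩))
        (hc (x, w1) (Or.inr ⟨rfl, Or.inr (Or.inl rfl)⟩))
        (hc (w2, x) (Or.inl ⟨rfl, Or.inr (Or.inr rfl)⟩))
        (hc (x, w2) (Or.inr ⟨rfl, Or.inr (Or.inr rfl)⟩))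
    · intro x hx3 y hy3 hxy c hpx hpy
      obtain ⟨hxw2, hxw1, hxv⟩ := hmemT x hx3
      obtain ⟨hyw2, hyw1, hyv⟩ := hmemT y hy3
      rcases hpx with ⟨e1, e2⟩ | ⟨e1, e2⟩ <;> rcases hpy with ⟨f1, f2⟩ | ⟨f1, f2⟩ <;>
        [ exact hxy (e1 ▸ f1 ▸ rfl) ;
          (rcases e2 with h|h|h <;> exact absurd (f1 ▸ h) (by assumption)) ;
          (rcases f2 with h|h|h <;> exact absurd (e1 ▸ h) (by assumption)) ;
          exact hxy (e1 ▸ f1 ▸ rfl) ]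
  -- per-factor evaluation
  have hsingle : ∀ w : Fin n, w ≠ v → tEx (fun ω => ind (tadj ω w v)) = (1/2 : ℝ) := by
    intro w hwv
    have : ∀ ω : TOmega n, ind (tadj ω w v) = ind ((decide (tadj ω w v)) = true) :=
      fun ω => (ind_decide _).symm
    rw [tEx_congr this, tEx_pair hwv (fun b => ind (b = true))]
    rw [ind_of rfl, ind_of_not (by simp)]
    norm_num
  have hφval : ∀ x ∈ T, tEx (φ x) = (5/8 : ℝ) := by
    intro x hx3
    obtain ⟨hxw2, hxw1, hxv⟩ := hmemT x hx3
    have hptx : ∀ ω : TOmega n, φ x ω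
        = 1 - ind (tadj ω v x)
          + ∏ i : Fin 3, (fun i b => ind (b = true)) i
              (decide (tadj ω ((![v, w1, w2]) i) x)) := by
      intro ω
      rw [Fin.prod_univ_three]
      simp only [ind_decide]
      simp only [Matrix.cons_val_zero, Matrix.cons_val_one, Matrix.head_cons,
        Matrix.cons_val_two, Matrix.tail_cons, ind_decide]
      show ind (tadj ω v x → tadj ω w1 x ∧ tadj ω w2 x) = _
      by_cases hvx : tadj ω v x
      · by_cases hw1x : tadj ω w1 x
        · by_cases hw2x : tadj ω w2 x
          · rw [ind_of (fun _ => ⟨hw1x, hw2x⟩), ind_of hvx, ind_of hw1x, ind_of hw2x]; ring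
          · rw [ind_of_not (fun hc => hw2x (hc hvx).2), ind_of hvx, ind_of hw1x,
              ind_of_not hw2x]; ring
        · rw [ind_of_not (fun hc => hw1x (hc hvx).1), ind_of hvx, ind_of_not hw1x]; ring
      · rw [ind_of (fun hc => absurd hc hvx), ind_of_not hvx]; ring
    rw [tEx_congr hptx, tEx_add, tEx_sub, tEx_const]
    have hvx : tEx (fun ω => ind (tadj ω v x)) = (1/2:ℝ) := by
      have : ∀ ω : TOmega n, ind (tadj ω v x) = ind ((decide (tadj ω v x)) = true) :=
        fun ω => (ind_decide _).symm
      rw [tEx_congr this, tEx_pair (Ne.symm hxv) (fun b => ind (b = true))]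
      rw [ind_of rfl, ind_of_not (by simp)]
      norm_num
    have htriple : tEx (fun ω => ∏ i : Fin 3, (fun i b => ind (b = true)) i
        (decide (tadj ω ((![v, w1, w2]) i) x))) = (1/8 : ℝ) := by
      rw [tEx_prod_pairs Finset.univ (fun i => (![v, w1, w2]) i) (fun _ => x)
        (fun _ b => ind (b = true)) ?_ ?_]
      · rw [Fin.prod_univ_three]
        rw [ind_of rfl, ind_of_not (by simp)]
        norm_num
      · intro i _
        fin_cases i <;>
          simp only [Matrix.cons_val_zero, Matrix.cons_val_one, Matrix.head_cons,
            Matrix.cons_val_two, Matrix.tail_cons]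
        · exact Ne.symm hxv
        · exact Ne.symm hxw1
        · exact Ne.symm hxw2
      · intro i _ j _ hij
        constructor
        · rintro ⟨h1, -⟩
          apply hij
          fin_cases i <;> fin_cases j <;> simp_all <;>
            first
              | rfl
              | exact absurd h1 (by assumption)
              | exact absurd h1.symm (by assumption)
              | exact absurd h1 h1v
              | exact absurd h1.symm h1v
        · rintro ⟨h1, -⟩
          fin_cases i <;>
            simp only [Matrix.cons_val_zero, Matrix.cons_val_one, Matrix.head_cons,
              Matrix.cons_val_two, Matrix.tail_cons] at h1
          · exact hxv h1.symm
          · exact hxw1 h1.symm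
          · exact hxw2 h1.symm
    rw [hvx, htriple]
    norm_num
  rw [split1, split2, split3, hsingle w1 h1v, hsingle w2 h2v,
    Finset.prod_congr rfl hφval, Finset.prod_const, card_T3 h1v h2v h12]
  nlinarith [hpow]


/-- vertices other than `v` not dominated by `v` -/
noncomputable def Rf (ω : TOmega n) (v : Fin n) : Finset (Fin n) :=
  (Finset.univ.erase v).filter (fun w => ¬ tadj ω v w)

noncomputable def Mf (ω : TOmega n) (v : Fin n) : Finset (Fin n) :=
  (Rf ω v).filter (fun w => ∀ x, tadj ω v x → tadj ω w x)

noncomputable def N2f (ω : TOmega n) (v : Fin n) : Finset (Fin n) :=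
  (Rf ω v).filter (fun w => ¬ ∀ x, tadj ω v x → tadj ω w x)

lemma card_Rf (ω : TOmega n) (v : Fin n) : deg ω v + (Rf ω v).card + 1 = n := by
  have h := Finset.card_filter_add_card_filter_not
    (s := Finset.univ.erase v) (p := fun w => tadj ω v w)
  have heq : (Finset.univ.erase v).filter (fun a => ¬(fun w => tadj ω v w) a) = Rf ω v := rfl
  rw [heq] at h
  have hc : (Finset.univ.erase v).card = n - 1 := by
    rw [Finset.card_erase_of_mem (by simp), Finset.card_univ, Fintype.card_fin]
  have hpos : 0 < n := by
    rcases v with ⟨_, hv⟩; omega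
  unfold deg
  omega

lemma card_N2f_Mf (ω : TOmega n) (v : Fin n) :
    (Mf ω v).card + (N2f ω v).card = (Rf ω v).card := by
  have h := Finset.card_filter_add_card_filter_not
    (s := Rf ω v) (p := fun w => ∀ x, tadj ω v x → tadj ω w x)
  have heq : (Rf ω v).filter (fun a => ¬(fun w => ∀ x, tadj ω v x → tadj ω w x) a)
      = N2f ω v := rfl
  rw [heq] at h
  exact h

lemma mem_Mf_dom {ω : TOmega n} {v w : Fin n} (h : w ∈ Mf ω v) : Dom ω v w := by
  rw [Mf, Finset.mem_filter, Rf, Finset.mem_filter, Finset.mem_erase] at h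
  exact ⟨h.1.1.1, h.1.2, h.2⟩

lemma tN1_ncard (ω : TOmega n) (v : Fin n) :
    (tN1 ω v).ncard = deg ω v := by
  have : tN1 ω v = ↑((Finset.univ.erase v).filter (fun w => tadj ω v w)) := by
    ext w
    simp only [tN1, Set.mem_setOf_eq, Finset.coe_filter, Finset.mem_erase]
    exact ⟨fun h => ⟨⟨Ne.symm h.1, Finset.mem_univ w⟩, h⟩, fun h => h.2⟩
  rw [this, Set.ncard_coe_finset, deg]

lemma tN2_ncard (ω : TOmega n) (v : Fin n) :
    (tN2 ω v).ncard = (N2f ω v).card := by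
  have : tN2 ω v = ↑(N2f ω v) := by
    ext w
    simp only [tN2, Set.mem_setOf_eq, N2f, Finset.coe_filter, Rf, Finset.mem_filter,
      Finset.mem_erase]
    constructor
    · rintro ⟨hwv, hnadj, x, hvx, hxw⟩
      refine ⟨⟨⟨hwv, Finset.mem_univ w⟩, hnadj⟩, ?_⟩
      intro hall
      have hxww : x ≠ w := hxw.1
      exact (tadj_rev hxww ω).mp (hall x hvx) hxw
    · rintro ⟨⟨⟨hwv, -⟩, hnadj⟩, hnall⟩
      push_neg at hnall
      obtain ⟨x, hvx, hnwx⟩ := hnall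
      have hxw : x ≠ w := by
        rintro rfl; exact hnadj hvx
      exact ⟨hwv, hnadj, x, hvx, (tadj_rev hxw.symm ω).mpr hnwx⟩
  rw [this, Set.ncard_coe_finset]

lemma seymour_iff (ω : TOmega n) (v : Fin n) :
    tSeymour ω v ↔ deg ω v ≤ (N2f ω v).card := by
  rw [tSeymour, tN1_ncard, tN2_ncard]

lemma seymour_deg_le {k : ℕ} (hk : 1 ≤ k) (hn : n = 2 * k) (ω : TOmega n) (v : Fin n)
    (h : tSeymour ω v) : deg ω v ≤ k - 1 := by
  rw [seymour_iff] at h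
  have h1 := card_Rf ω v
  have h2 := card_N2f_Mf ω v
  have h3 : (N2f ω v).card ≤ (Rf ω v).card := by omega
  omega

lemma not_seymour_two_doms {k : ℕ} (hk : 1 ≤ k) (hn : n = 2 * k) (ω : TOmega n) (v : Fin n)
    (hd : deg ω v ≤ k - 1) (h : ¬ tSeymour ω v) : 2 ≤ (Mf ω v).card := by
  rw [seymour_iff] at h
  have h1 := card_Rf ω v
  have h2 := card_N2f_Mf ω v
  omega


lemma tS_eq_sum (ω : TOmega n) : (tS ω : ℝ) = ∑ v : Fin n, ind (tSeymour ω v) := by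
  have hset : {v : Fin n | tSeymour ω v} = ↑(Finset.univ.filter (fun v => tSeymour ω v)) := by
    ext v; simp
  rw [tS, hset, Set.ncard_coe_finset, Finset.card_filter, Nat.cast_sum]
  apply Finset.sum_congr rfl
  intro v _
  by_cases h : tSeymour ω v <;> simp [h, ind_of, ind_of_not]

lemma J_le_I {k : ℕ} (hk : 1 ≤ k) (hn : n = 2 * k) (ω : TOmega n) (v : Fin n) :
    ind (tSeymour ω v) ≤ ind (deg ω v ≤ k - 1) :=
  ind_mono (seymour_deg_le hk hn ω v)

lemma I_sub_J_le {k : ℕ} (hk : 1 ≤ k) (hn : n = 2 * k) (ω : TOmega n) (v : Fin n) :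
    ind (deg ω v ≤ k - 1) - ind (tSeymour ω v)
      ≤ ∑ w1 : Fin n, ∑ w2 : Fin n, ind (w1 ≠ w2 ∧ Dom ω v w1 ∧ Dom ω v w2) := by
  have hRnn : (0:ℝ) ≤ ∑ w1 : Fin n, ∑ w2 : Fin n,
      ind (w1 ≠ w2 ∧ Dom ω v w1 ∧ Dom ω v w2) :=
    Finset.sum_nonneg fun w1 _ => Finset.sum_nonneg fun w2 _ => ind_nonneg _
  by_cases hS : tSeymour ω v
  · rw [ind_of hS]
    have := ind_le_one (deg ω v ≤ k - 1)
    linarith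
  by_cases hd : deg ω v ≤ k - 1
  · obtain ⟨w1, hw1, w2, hw2, hne⟩ :=
      Finset.one_lt_card.mp (not_seymour_two_doms hk hn ω v hd hS)
    have h1 : ind (w1 ≠ w2 ∧ Dom ω v w1 ∧ Dom ω v w2) = 1 :=
      ind_of ⟨hne, mem_Mf_dom hw1, mem_Mf_dom hw2⟩
    have hin : ind (w1 ≠ w2 ∧ Dom ω v w1 ∧ Dom ω v w2)
        ≤ ∑ w2 : Fin n, ind (w1 ≠ w2 ∧ Dom ω v w1 ∧ Dom ω v w2) :=
      Finset.single_le_sum (f := fun w2' => ind (w1 ≠ w2' ∧ Dom ω v w1 ∧ Dom ω v w2'))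
        (fun i _ => ind_nonneg _) (Finset.mem_univ w2)
    have hout : (∑ w2 : Fin n, ind (w1 ≠ w2 ∧ Dom ω v w1 ∧ Dom ω v w2))
        ≤ ∑ w1 : Fin n, ∑ w2 : Fin n, ind (w1 ≠ w2 ∧ Dom ω v w1 ∧ Dom ω v w2) :=
      Finset.single_le_sum (f := fun w1 => ∑ w2 : Fin n,
          ind (w1 ≠ w2 ∧ Dom ω v w1 ∧ Dom ω v w2))
        (fun i _ => Finset.sum_nonneg fun w2 _ => ind_nonneg _) (Finset.mem_univ w1)
    have hle1 := ind_le_one (deg ω v ≤ k - 1)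
    have hnn := ind_nonneg (tSeymour ω v)
    linarith
  · rw [ind_of_not hd]
    have := ind_nonneg (tSeymour ω v)
    linarith

/-- per-vertex expected discrepancy bound -/
lemma tEx_I_sub_J {k : ℕ} (hk : 1 ≤ k) (hn : n = 2 * k) (v : Fin n) :
    tEx (fun ω => ind (deg ω v ≤ k - 1) - ind (tSeymour ω v))
      ≤ (n:ℝ)^2 * (5/8 : ℝ)^(n-3) := by
  have hpos : 0 < n := by omega
  have h1 := tEx_mono (f := fun ω => ind (deg ω v ≤ k - 1) - ind (tSeymour ω v))
    (g := fun ω => ∑ w1 : Fin n, ∑ w2 : Fin n, ind (w1 ≠ w2 ∧ Dom ω v w1 ∧ Dom ω v w2))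
    (fun ω => I_sub_J_le hk hn ω v)
  refine h1.trans ?_
  rw [tEx_sum]
  have h2 : ∀ w1 : Fin n, tEx (fun ω => ∑ w2 : Fin n,
      ind (w1 ≠ w2 ∧ Dom ω v w1 ∧ Dom ω v w2)) ≤ (n:ℝ) * (5/8 : ℝ)^(n-3) := by
    intro w1
    rw [tEx_sum]
    have : ∀ w2 : Fin n, w2 ∈ Finset.univ → tEx (fun ω =>
        ind (w1 ≠ w2 ∧ Dom ω v w1 ∧ Dom ω v w2)) ≤ (5/8 : ℝ)^(n-3) :=
      fun w2 _ => tEx_bad v w1 w2 hpos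
    calc (∑ w2 : Fin n, tEx (fun ω => ind (w1 ≠ w2 ∧ Dom ω v w1 ∧ Dom ω v w2)))
        ≤ ∑ _w2 : Fin n, (5/8 : ℝ)^(n-3) := Finset.sum_le_sum this
      _ = (n:ℝ) * (5/8 : ℝ)^(n-3) := by
          rw [Finset.sum_const, Finset.card_univ, Fintype.card_fin, nsmul_eq_mul]
  calc (∑ w1 : Fin n, tEx (fun ω => ∑ w2 : Fin n,
        ind (w1 ≠ w2 ∧ Dom ω v w1 ∧ Dom ω v w2)))
      ≤ ∑ _w1 : Fin n, (n:ℝ) * (5/8 : ℝ)^(n-3) := Finset.sum_le_sum (fun w1 _ => h2 w1)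
    _ = (n:ℝ) * ((n:ℝ) * (5/8 : ℝ)^(n-3)) := by
        rw [Finset.sum_const, Finset.card_univ, Fintype.card_fin, nsmul_eq_mul]
    _ = (n:ℝ)^2 * (5/8 : ℝ)^(n-3) := by ring

/- ### binomial identities -/

lemma sum_half_choose {k : ℕ} (hk : 1 ≤ k) :
    (∑ i ∈ Finset.range ((2*k-1) + 1),
      if i ≤ k - 1 then (((2*k-1).choose i : ℕ) : ℝ) else 0) = 2^(2*k-2) := by
  have hnat : (∑ i ∈ Finset.range ((2*k-1) + 1),
      if i ≤ k - 1 then ((2*k-1).choose i) else 0) = 2^(2*k-2) := by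
    have hcut : (∑ i ∈ Finset.range ((2*k-1) + 1),
        if i ≤ k - 1 then ((2*k-1).choose i) else 0)
        = ∑ i ∈ Finset.range k, (2*k-1).choose i := by
      rw [← Finset.sum_filter]
      apply Finset.sum_congr ?_ (fun _ _ => rfl)
      ext i
      simp only [Finset.mem_filter, Finset.mem_range]
      omega
    rw [hcut]
    have := Nat.sum_range_choose_halfway (k-1)
    have he : 2 * (k-1) + 1 = 2*k - 1 := by omega
    have he2 : (k-1) + 1 = k := by omega
    rw [he, he2] at this
    rw [this]
    have : 4^(k-1) = 2^(2*k-2) := by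
      rw [show (4:ℕ) = 2^2 from rfl, ← pow_mul]
      congr 1
      omega
    rw [this]
  calc (∑ i ∈ Finset.range ((2*k-1) + 1),
      if i ≤ k - 1 then (((2*k-1).choose i : ℕ) : ℝ) else 0)
      = (((∑ i ∈ Finset.range ((2*k-1) + 1),
          if i ≤ k - 1 then ((2*k-1).choose i) else 0 : ℕ)) : ℝ) := by
        push_cast
        rfl
    _ = 2^(2*k-2) := by rw [hnat]; push_cast; ring

lemma sumA_identities {k : ℕ} (hk : 2 ≤ k) :
    (∑ i ∈ Finset.range ((2*k-2) + 1),
        if i ≤ k - 2 then ((2*k-2).choose i) else 0)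
      + (∑ i ∈ Finset.range ((2*k-2) + 1),
        if i ≤ k - 1 then ((2*k-2).choose i) else 0) = 2^(2*k-2)
    ∧ (∑ i ∈ Finset.range ((2*k-2) + 1),
        if i ≤ k - 1 then ((2*k-2).choose i) else 0)
      = (∑ i ∈ Finset.range ((2*k-2) + 1),
        if i ≤ k - 2 then ((2*k-2).choose i) else 0) + (2*k-2).choose (k-1) := by
  set m := 2*k-2 with hm
  constructor
  · have hrefl := Finset.sum_range_reflect
      (fun i => if i ≤ k - 2 then (m.choose i) else 0) (m+1)
    have hpt : ∀ j ∈ Finset.range (m+1),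
        (if (m + 1 - 1 - j) ≤ k - 2 then (m.choose (m + 1 - 1 - j)) else 0)
        = (if k ≤ j then (m.choose j) else 0) := by
      intro j hj
      rw [Finset.mem_range] at hj
      by_cases h : k ≤ j
      · rw [if_pos (by omega), if_pos h]
        have : m + 1 - 1 - j = m - j := by omega
        rw [this, Nat.choose_symm (by omega)]
      · rw [if_neg (by omega), if_neg h]
    rw [Finset.sum_congr rfl hpt] at hrefl
    rw [← hrefl, ← Finset.sum_add_distrib]
    have hpt2 : ∀ j ∈ Finset.range (m+1),
        ((if k ≤ j then (m.choose j) else 0) + (if j ≤ k - 1 then (m.choose j) else 0))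
        = m.choose j := by
      intro j _
      by_cases h : k ≤ j
      · rw [if_pos h, if_neg (by omega), add_zero]
      · rw [if_neg h, if_pos (by omega), zero_add]
    rw [Finset.sum_congr rfl hpt2, Nat.sum_range_choose]
  · have hpt : ∀ j ∈ Finset.range (m+1),
        (if j ≤ k - 1 then (m.choose j) else 0)
        = (if j ≤ k - 2 then (m.choose j) else 0)
          + (if j = k - 1 then (m.choose j) else 0) := by
      intro j _
      by_cases h1 : j ≤ k - 2
      · rw [if_pos (by omega), if_pos h1, if_neg (by omega), add_zero]
      · by_cases h2 : j = k - 1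
        · rw [if_pos (by omega), if_neg h1, if_pos h2, zero_add]
        · rw [if_neg (by omega), if_neg h1, if_neg h2, add_zero]
    rw [Finset.sum_congr rfl hpt, Finset.sum_add_distrib]
    congr 1
    rw [Finset.sum_ite_eq' (Finset.range (m+1)) (k-1) (fun j => m.choose j),
      if_pos (by rw [Finset.mem_range]; omega)]

/- ### variance formula -/

lemma tVarS_eq (n : ℕ) :
    tVarS n = tEx (fun ω : TOmega n => ((tS ω : ℝ))^2) - (tES n)^2 := by
  unfold tVarS
  have hpt : ∀ ω : TOmega n, ((tS ω : ℝ) - tES n)^2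
      = ((tS ω : ℝ)^2 - (2 * tES n) * (tS ω : ℝ)) + (tES n)^2 := fun ω => by ring
  rw [tEx_congr hpt, tEx_add, tEx_sub, tEx_smul, tEx_const]
  unfold tES
  ring


noncomputable def bk (k : ℕ) : ℝ := (((2*k-2).choose (k-1) : ℕ) : ℝ) / 2^(2*k-2)

lemma EI_val {k : ℕ} (hk : 1 ≤ k) {n : ℕ} (hn : n = 2*k) (v : Fin n) :
    tEx (fun ω : TOmega n => ind (deg ω v ≤ k-1)) = 1/2 := by
  subst hn
  rw [tEx_ind_deg_le v (k-1),
    show 2*k - 1 = 2*k-1 from rfl, sum_half_choose hk]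
  have h2 : (2:ℝ)^(2*k-1) = 2 * 2^(2*k-2) := by
    rw [← pow_succ']
    congr 1
    omega
  have hp : (0:ℝ) < 2^(2*k-2) := by positivity
  rw [div_pow, one_pow, h2]
  field_simp

lemma EII_val {k : ℕ} (hk : 2 ≤ k) {n : ℕ} (hn : n = 2*k) {u v : Fin n} (huv : u ≠ v) :
    tEx (fun ω : TOmega n => ind (deg ω u ≤ k-1) * ind (deg ω v ≤ k-1))
      = (1 - (bk k)^2)/4 := by
  subst hn
  rw [tEx_II huv (k-2) (k-1) (by omega), count_powerset_card_le, count_powerset_card_le,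
    card_Tuv huv]
  have hcast1 : (∑ i ∈ Finset.range ((2*k - 2) + 1),
      if i ≤ k-2 then (((2*k-2).choose i : ℕ) : ℝ) else 0)
      = (((∑ i ∈ Finset.range ((2*k-2) + 1),
          if i ≤ k-2 then ((2*k-2).choose i) else 0 : ℕ)) : ℝ) := by
    push_cast
    rfl
  have hcast2 : (∑ i ∈ Finset.range ((2*k - 2) + 1),
      if i ≤ k-1 then (((2*k-2).choose i : ℕ) : ℝ) else 0)
      = (((∑ i ∈ Finset.range ((2*k-2) + 1),
          if i ≤ k-1 then ((2*k-2).choose i) else 0 : ℕ)) : ℝ) := by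
    push_cast
    rfl
  rw [hcast1, hcast2]
  obtain ⟨hadd, hdiff⟩ := sumA_identities hk
  set A1 := (∑ i ∈ Finset.range ((2*k-2) + 1),
      if i ≤ k-2 then ((2*k-2).choose i) else 0) with hA1
  set A2 := (∑ i ∈ Finset.range ((2*k-2) + 1),
      if i ≤ k-1 then ((2*k-2).choose i) else 0) with hA2
  set B := (2*k-2).choose (k-1) with hB
  have hP : (0:ℝ) < 2^(2*k-2) := by positivity
  have haddR : ((A1:ℝ)) + (A2:ℝ) = 2^(2*k-2) := by
    exact_mod_cast congrArg (Nat.cast : ℕ → ℝ) hadd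
  have hdiffR : (A2:ℝ) = (A1:ℝ) + (B:ℝ) := by exact_mod_cast congrArg (Nat.cast : ℕ → ℝ) hdiff
  have ha1 : (A1:ℝ) = (2^(2*k-2) - (B:ℝ))/2 := by linarith
  have ha2 : (A2:ℝ) = (2^(2*k-2) + (B:ℝ))/2 := by linarith
  have hpowe : ((1:ℝ)/2)^(2*(2*k-2)+1) = 1/(2 * (2^(2*k-2))^2) := by
    rw [div_pow, one_pow]
    congr 1
    rw [← pow_mul]
    first
      | (rw [← pow_succ]; congr 1; ring)
      | (rw [← pow_succ']; congr 1; ring)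
  rw [ha1, ha2, hpowe, bk]
  field_simp
  ring

set_option maxHeartbeats 1000000 in
lemma main_est {k : ℕ} (hk : 2 ≤ k) :
    |tVarS (2*k) / ((2*k : ℕ) : ℝ) - (1/4 - (2*(k:ℝ)-1) * (bk k)^2 / 4)|
      ≤ 4 * (2*(k:ℝ))^3 * (5/8 : ℝ)^(2*k-3) := by
  have hk1 : 1 ≤ k := by omega
  have hnat : (((2*k : ℕ)) : ℝ) = 2*(k:ℝ) := by push_cast; ring
  set n : ℕ := 2*k with hn
  have hnn : n = 2*k := rfl
  have hnpos : (0:ℝ) < (n:ℝ) := by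
    rw [hnat]
    positivity
  set SI : TOmega n → ℝ := fun ω => ∑ v : Fin n, ind (deg ω v ≤ k-1) with hSI
  set SJ : TOmega n → ℝ := fun ω => (tS ω : ℝ) with hSJ
  -- pointwise facts
  have hJleI : ∀ (ω : TOmega n) (v : Fin n), ind (tSeymour ω v) ≤ ind (deg ω v ≤ k-1) :=
    fun ω v => J_le_I hk1 hnn ω v
  have hSJSI : ∀ ω, SJ ω ≤ SI ω := by
    intro ω
    rw [hSJ, hSI]
    simp only
    rw [tS_eq_sum ω]
    exact Finset.sum_le_sum fun v _ => hJleI ω v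
  have hSJ0 : ∀ ω, 0 ≤ SJ ω := fun ω => Nat.cast_nonneg _
  have hSIn : ∀ ω, SI ω ≤ (n:ℝ) := by
    intro ω
    calc SI ω ≤ ∑ _v : Fin n, (1:ℝ) := Finset.sum_le_sum fun v _ => ind_le_one _
      _ = (n:ℝ) := by rw [Finset.sum_const, Finset.card_univ, Fintype.card_fin,
        nsmul_eq_mul, mul_one]
  -- expectations
  have hESI : tEx SI = (k:ℝ) := by
    rw [hSI, tEx_sum]
    rw [Finset.sum_congr rfl (fun v _ => EI_val hk1 hnn v), Finset.sum_const,
      Finset.card_univ, Fintype.card_fin, nsmul_eq_mul]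
    rw [hnn]
    push_cast
    ring
  have hESI2 : tEx (fun ω => SI ω^2)
      = (n:ℝ) * (1/2 + ((n:ℝ)-1) * ((1 - (bk k)^2)/4)) := by
    have hpt : ∀ ω, SI ω^2 = ∑ u : Fin n, ∑ v : Fin n,
        ind (deg ω u ≤ k-1) * ind (deg ω v ≤ k-1) := by
      intro ω
      rw [hSI]
      simp only
      rw [sq, Finset.sum_mul_sum]
    rw [tEx_congr hpt, tEx_sum]
    have hrow : ∀ u : Fin n, tEx (fun ω => ∑ v : Fin n,
        ind (deg ω u ≤ k-1) * ind (deg ω v ≤ k-1))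
        = 1/2 + ((n:ℝ)-1) * ((1 - (bk k)^2)/4) := by
      intro u
      rw [tEx_sum]
      rw [← Finset.add_sum_erase _ _ (Finset.mem_univ u)]
      have hdiag : tEx (fun ω => ind (deg ω u ≤ k-1) * ind (deg ω u ≤ k-1)) = 1/2 := by
        have : ∀ ω : TOmega n, ind (deg ω u ≤ k-1) * ind (deg ω u ≤ k-1)
            = ind (deg ω u ≤ k-1) := by
          intro ω
          rw [ind_mul_ind]
          exact ind_congr (and_self_iff)
        rw [tEx_congr this, EI_val hk1 hnn u]
      have hoff : ∀ v ∈ Finset.univ.erase u,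
          tEx (fun ω => ind (deg ω u ≤ k-1) * ind (deg ω v ≤ k-1))
          = (1 - (bk k)^2)/4 := by
        intro v hv
        exact EII_val hk hnn (Ne.symm (Finset.mem_erase.mp hv).1)
      rw [hdiag, Finset.sum_congr rfl hoff, Finset.sum_const,
        Finset.card_erase_of_mem (Finset.mem_univ u), Finset.card_univ, Fintype.card_fin,
        nsmul_eq_mul]
      have : ((n - 1 : ℕ) : ℝ) = (n:ℝ) - 1 := by
        rw [Nat.cast_sub (by omega)]
        norm_num
      rw [this]
    rw [Finset.sum_congr rfl (fun u _ => hrow u), Finset.sum_const, Finset.card_univ,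
      Fintype.card_fin, nsmul_eq_mul]
  -- discrepancy
  have hED : tEx SI - tEx SJ ≤ (n:ℝ)^3 * (5/8 : ℝ)^(n-3) := by
    have : tEx SI - tEx SJ = tEx (fun ω => SI ω - SJ ω) := (tEx_sub SI SJ).symm
    rw [this]
    have hpt : ∀ ω : TOmega n, SI ω - SJ ω
        = ∑ v : Fin n, (ind (deg ω v ≤ k-1) - ind (tSeymour ω v)) := by
      intro ω
      rw [hSI, hSJ]
      simp only
      rw [tS_eq_sum ω, Finset.sum_sub_distrib]
    rw [tEx_congr hpt, tEx_sum]
    calc (∑ v : Fin n, tEx (fun ω => ind (deg ω v ≤ k-1) - ind (tSeymour ω v)))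
        ≤ ∑ _v : Fin n, (n:ℝ)^2 * (5/8 : ℝ)^(n-3) :=
          Finset.sum_le_sum fun v _ => tEx_I_sub_J hk1 hnn v
      _ = (n:ℝ) * ((n:ℝ)^2 * (5/8 : ℝ)^(n-3)) := by
          rw [Finset.sum_const, Finset.card_univ, Fintype.card_fin, nsmul_eq_mul]
      _ = (n:ℝ)^3 * (5/8 : ℝ)^(n-3) := by ring
  have hED0 : 0 ≤ tEx SI - tEx SJ := by
    have := tEx_mono hSJSI
    linarith
  -- second moments comparison
  have h2a : tEx (fun ω => SJ ω^2) ≤ tEx (fun ω => SI ω^2) := by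
    apply tEx_mono
    intro ω
    have h1 := hSJ0 ω
    have h2 := hSJSI ω
    nlinarith
  have h2b : tEx (fun ω => SI ω^2)
      ≤ tEx (fun ω => SJ ω^2) + 2*(n:ℝ) * (tEx SI - tEx SJ) := by
    have hpt : ∀ ω, SI ω^2 ≤ SJ ω^2 + 2*(n:ℝ) * (SI ω - SJ ω) := by
      intro ω
      have h1 := hSJ0 ω
      have h2 := hSJSI ω
      have h3 := hSIn ω
      nlinarith
    have := tEx_mono hpt
    have heq : tEx (fun ω => SJ ω^2 + 2*(n:ℝ) * (SI ω - SJ ω))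
        = tEx (fun ω => SJ ω^2) + 2*(n:ℝ) * (tEx SI - tEx SJ) := by
      rw [tEx_add, tEx_smul, tEx_sub]
    linarith
  -- means comparison
  have hm0 : 0 ≤ tEx SJ := tEx_nonneg hSJ0
  have hm1 : tEx SJ ≤ tEx SI := tEx_mono hSJSI
  have hm2 : tEx SI ≤ (n:ℝ) := by
    have := tEx_mono hSIn
    rwa [tEx_const] at this
  have h3 : (tEx SJ)^2 ≤ (tEx SI)^2 := by nlinarith
  have h4 : (tEx SI)^2 ≤ (tEx SJ)^2 + 2*(n:ℝ)*(tEx SI - tEx SJ) := by nlinarith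
  -- variance of SJ is tVarS
  have hVarJ : tVarS n = tEx (fun ω => SJ ω^2) - (tEx SJ)^2 := by
    rw [tVarS_eq n]
    rfl
  -- variance difference bound
  have hVdiff : |tVarS n - (tEx (fun ω => SI ω^2) - (tEx SI)^2)|
      ≤ 4*(n:ℝ) * ((n:ℝ)^3 * (5/8 : ℝ)^(n-3)) := by
    rw [hVarJ, abs_le]
    constructor
    · nlinarith
    · nlinarith
  -- VarSI exact value
  have hVarSIval : tEx (fun ω => SI ω^2) - (tEx SI)^2
      = (n:ℝ)/4 - (n:ℝ)*((n:ℝ)-1)*(bk k)^2/4 := by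
    rw [hESI2, hESI]
    have hnk : (n:ℝ) = 2*(k:ℝ) := hnat
    rw [hnk]
    ring
  -- conclude
  have hgoal : |tVarS n / (n:ℝ) - (1/4 - ((n:ℝ)-1) * (bk k)^2 / 4)|
      ≤ 4 * (n:ℝ)^3 * (5/8 : ℝ)^(n-3) := by
    have hdiv : tVarS n / (n:ℝ) - (1/4 - ((n:ℝ)-1) * (bk k)^2 / 4)
        = (tVarS n - ((n:ℝ)/4 - (n:ℝ)*((n:ℝ)-1)*(bk k)^2/4)) / (n:ℝ) := by
      field_simp
    rw [hdiv, abs_div, abs_of_pos hnpos, div_le_iff₀ hnpos, ← hVarSIval]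
    calc |tVarS n - (tEx (fun ω => SI ω^2) - (tEx SI)^2)|
        ≤ 4*(n:ℝ) * ((n:ℝ)^3 * (5/8 : ℝ)^(n-3)) := hVdiff
      _ = 4 * (n:ℝ)^3 * (5/8 : ℝ)^(n-3) * (n:ℝ) := by ring
  have hne : n - 3 = 2*k - 3 := by omega
  have h5 : ((n:ℕ) : ℝ) = 2*(k:ℝ) := hnat
  calc |tVarS (2*k) / ((2*k : ℕ) : ℝ) - (1/4 - (2*(k:ℝ)-1) * (bk k)^2 / 4)|
      = |tVarS n / (n:ℝ) - (1/4 - ((n:ℝ)-1) * (bk k)^2 / 4)| := by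
        rw [hnn, h5]
    _ ≤ 4 * (n:ℝ)^3 * (5/8 : ℝ)^(n-3) := hgoal
    _ = 4 * (2*(k:ℝ))^3 * (5/8 : ℝ)^(2*k-3) := by rw [h5, hne]


open Stirling Real in
lemma stirling_ratio {m : ℕ} (hm : 1 ≤ m) :
    stirlingSeq (2*m) / (stirlingSeq m)^2
      = (((2*m).choose m : ℕ) : ℝ)/4^m * Real.sqrt m := by
  have hmR : (0:ℝ) < (m:ℝ) := by exact_mod_cast hm
  have hsq : (0:ℝ) < Real.sqrt m := Real.sqrt_pos.mpr hmR
  have he : (0:ℝ) < Real.exp 1 := Real.exp_pos 1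
  have hfm : (0:ℝ) < (Nat.factorial m : ℝ) := by exact_mod_cast m.factorial_pos
  have hf2m : (0:ℝ) < (Nat.factorial (2*m) : ℝ) := by exact_mod_cast (2*m).factorial_pos
  have hpowm : (0:ℝ) < ((m:ℝ)/Real.exp 1)^m := by positivity
  have hchoose : (Nat.factorial (2*m) : ℝ)
      = (((2*m).choose m : ℕ) : ℝ) * (Nat.factorial m : ℝ) * (Nat.factorial m : ℝ) := by
    have h0 := Nat.choose_mul_factorial_mul_factorial (show m ≤ 2*m by omega)
    have h2 : 2*m - m = m := by omega
    rw [h2] at h0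
    exact_mod_cast h0.symm
  unfold stirlingSeq
  have hc2 : ((2*m : ℕ) : ℝ) = 2*(m:ℝ) := by push_cast; ring
  rw [hc2]
  have hsqrt4 : Real.sqrt (2*(2*(m:ℝ))) = 2 * Real.sqrt m := by
    rw [show 2*(2*(m:ℝ)) = (2:ℝ)^2 * m by ring,
      Real.sqrt_mul (by positivity), Real.sqrt_sq (by norm_num)]
  have hbig : ((2*(m:ℝ))/Real.exp 1)^(2*m) = 4^m * (((m:ℝ)/Real.exp 1)^m)^2 := by
    rw [show (2*(m:ℝ))/Real.exp 1 = 2 * ((m:ℝ)/Real.exp 1) by ring, mul_pow,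
      show (4:ℝ)^m = 2^(2*m) by rw [show (4:ℝ) = 2^2 by norm_num, ← pow_mul],
      ← pow_mul, show m*2 = 2*m by ring]
  have hmss : Real.sqrt m * Real.sqrt m = (m:ℝ) := Real.mul_self_sqrt hmR.le
  rw [hsqrt4, hbig, div_pow (a := (Nat.factorial m : ℝ)), mul_pow,
    Real.sq_sqrt (by positivity : (0:ℝ) ≤ 2*(m:ℝ)), hchoose,
    show (2:ℝ)*(m:ℝ) = 2*(Real.sqrt m * Real.sqrt m) by rw [hmss]]
  have h4 : (0:ℝ) < (4:ℝ)^m := by positivity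
  field_simp

open Real in
lemma tendsto_w : Filter.Tendsto
    (fun m : ℕ => (((2*m).choose m : ℕ) : ℝ)/4^m * Real.sqrt m)
    atTop (nhds (1/Real.sqrt Real.pi)) := by
  have h2m : Filter.Tendsto (fun m : ℕ => 2*m) atTop atTop :=
    Filter.tendsto_atTop_mono (fun m => by simp only [id_eq]; omega) Filter.tendsto_id
  have hnum : Filter.Tendsto (fun m : ℕ => Stirling.stirlingSeq (2*m)) atTop
      (nhds (Real.sqrt Real.pi)) := Stirling.tendsto_stirlingSeq_sqrt_pi.comp h2m
  have hden : Filter.Tendsto (fun m : ℕ => (Stirling.stirlingSeq m)^2) atTop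
      (nhds (Real.sqrt Real.pi * Real.sqrt Real.pi)) := by
    have := Stirling.tendsto_stirlingSeq_sqrt_pi
    have hmul := this.mul this
    simpa [sq] using hmul
  have hlim := hnum.div hden (by
    have : Real.sqrt Real.pi * Real.sqrt Real.pi = Real.pi :=
      Real.mul_self_sqrt Real.pi_pos.le
    rw [this]
    exact ne_of_gt Real.pi_pos)
  have heq : (fun m : ℕ => Stirling.stirlingSeq (2*m) / (Stirling.stirlingSeq m)^2)
      =ᶠ[atTop] (fun m : ℕ => (((2*m).choose m : ℕ) : ℝ)/4^m * Real.sqrt m) := by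
    filter_upwards [Filter.eventually_ge_atTop 1] with m hm
    exact stirling_ratio hm
  have hfinal := hlim.congr' heq
  have hval : Real.sqrt Real.pi / (Real.sqrt Real.pi * Real.sqrt Real.pi)
      = 1 / Real.sqrt Real.pi := by
    have hs : (0:ℝ) < Real.sqrt Real.pi := Real.sqrt_pos.mpr Real.pi_pos
    rw [div_mul_eq_div_div, div_self (ne_of_gt hs)]
  rwa [hval] at hfinal

lemma tendsto_Q : Filter.Tendsto (fun k : ℕ => (2*(k:ℝ)-1) * (bk k)^2) atTop
    (nhds (2/Real.pi)) := by
  rw [← Filter.tendsto_add_atTop_iff_nat 1]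
  have heq : (fun m : ℕ => (2*((m+1 : ℕ):ℝ)-1) * (bk (m+1))^2)
      =ᶠ[atTop] (fun m : ℕ => ((((2*m).choose m : ℕ) : ℝ)/4^m * Real.sqrt m)^2
        * (2 + 1/(m:ℝ))) := by
    filter_upwards [Filter.eventually_ge_atTop 1] with m hm
    have hmR : (0:ℝ) < (m:ℝ) := by exact_mod_cast hm
    have hbk : bk (m+1) = (((2*m).choose m : ℕ) : ℝ)/4^m := by
      unfold bk
      have h1 : 2*(m+1) - 2 = 2*m := by omega
      have h2 : (m+1) - 1 = m := by omega
      rw [h1, h2]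
      congr 1
      rw [show (4:ℝ) = 2^2 by norm_num, ← pow_mul]
    have hcast : ((m+1 : ℕ):ℝ) = (m:ℝ) + 1 := by push_cast; ring
    rw [hbk, hcast, mul_pow, Real.sq_sqrt hmR.le]
    field_simp
    ring
  have hlim : Filter.Tendsto (fun m : ℕ => ((((2*m).choose m : ℕ) : ℝ)/4^m * Real.sqrt m)^2
      * (2 + 1/(m:ℝ))) atTop (nhds ((1/Real.sqrt Real.pi)^2 * (2 + 0))) := by
    apply Filter.Tendsto.mul
    · exact tendsto_w.pow 2
    · exact tendsto_const_nhds.add tendsto_one_div_atTop_nhds_zero_nat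
  have hval : (1/Real.sqrt Real.pi)^2 * (2 + 0) = 2/Real.pi := by
    rw [div_pow, one_pow, Real.sq_sqrt Real.pi_pos.le]
    ring
  rw [hval] at hlim
  exact hlim.congr' heq.symm


lemma tendsto_err : Filter.Tendsto (fun k : ℕ =>
    tVarS (2 * k) / ((2 * k : ℕ) : ℝ) - (1/4 - (2*(k:ℝ)-1) * (bk k)^2 / 4))
    atTop (nhds 0) := by
  have hB : Filter.Tendsto (fun k : ℕ => (32 * (8/5:ℝ)^3) * ((k:ℝ)^3 * ((25/64):ℝ)^k))
      atTop (nhds 0) := by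
    have h0 := tendsto_pow_const_mul_const_pow_of_abs_lt_one 3
      (show |(25/64:ℝ)| < 1 by rw [abs_of_pos (by norm_num)]; norm_num)
    simpa using h0.const_mul (32 * (8/5:ℝ)^3)
  apply squeeze_zero_norm' ?_ hB
  filter_upwards [Filter.eventually_ge_atTop 2] with k hk
  rw [Real.norm_eq_abs]
  refine (main_est hk).trans ?_
  have hsplit : (5/8:ℝ)^(2*k-3) = (8/5:ℝ)^3 * ((25/64):ℝ)^k := by
    have h2 : ((25/64):ℝ)^k = (5/8:ℝ)^(2*k) := by
      rw [show (25/64:ℝ) = (5/8:ℝ)^2 by norm_num, ← pow_mul]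
    have h3 : (5/8:ℝ)^(2*k) = (5/8:ℝ)^(2*k-3) * (5/8:ℝ)^3 := by
      rw [← pow_add]
      congr 1
      omega
    rw [h2, h3]
    have h4 : (8/5:ℝ)^3 * (5/8:ℝ)^3 = 1 := by
      rw [← mul_pow]
      norm_num
    nlinarith [h4]
  rw [hsplit]
  have : 4 * (2*(k:ℝ))^3 = 32 * (k:ℝ)^3 := by ring
  rw [this]
  have hknn : (0:ℝ) ≤ (k:ℝ)^3 := by positivity
  have hpnn : (0:ℝ) ≤ ((25/64):ℝ)^k := by positivity
  nlinarith [hknn, hpnn]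

end SeymourAux

/-- Along even values of `n`, the variance of the number of Seymour vertices of the random
tournament on `n` vertices satisfies `Var(S_n)/n → 1/4 − 1/(2π)` as `n → ∞`. -/
theorem variance_seymour_asymptotic_even :
    Filter.Tendsto (fun k : ℕ => tVarS (2 * k) / ((2 * k : ℕ) : ℝ)) Filter.atTop
      (nhds (1 / 4 - 1 / (2 * Real.pi))) := by
  have hmain : Filter.Tendsto (fun k : ℕ => 1/4 - (2*(k:ℝ)-1) * (SeymourAux.bk k)^2 / 4)
      Filter.atTop (nhds (1/4 - 1/(2*Real.pi))) := by
    have h2 : Filter.Tendsto (fun k : ℕ => (2*(k:ℝ)-1) * (SeymourAux.bk k)^2 / 4)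
        Filter.atTop (nhds ((2/Real.pi)/4)) := SeymourAux.tendsto_Q.div_const 4
    have h3 := (tendsto_const_nhds (x := (1:ℝ)/4) (f := Filter.atTop (α := ℕ))).sub h2
    have hval : (1:ℝ)/4 - (2/Real.pi)/4 = 1/4 - 1/(2*Real.pi) := by
      have hp : Real.pi ≠ 0 := ne_of_gt Real.pi_pos
      field_simp
      ring
    rwa [hval] at h3
  have hsum := hmain.add SeymourAux.tendsto_err
  rw [add_zero] at hsum
  refine hsum.congr fun k => ?_
  ring
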